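/- arXiv:1508.01880 — 2 statements merged into one kernel-verified Lean document; each statement's English description precedes it below -/
import Mathlib

section
/- For any two random variables X and Y taking values in finite sets, there exist a random variable S taking values in a finite set S, with S independent of X, and a function g : X × S → Y such that Y = g(X, S) almost surely. -/
open Finset
open scoped Classical

noncomputable section

/-- Probability that the random variable `X` takes the value `a`, under the
probability mass function `μ` on the finite sample space `Ω`. -/
def pr {Ω α : Type*} [Fintype Ω] (μ : Ω → ℝ) (X : Ω → α) (a : α) : ℝ :=
  ∑ ω, if X ω = a then μ ω else 0

/-- `μ` is a probability mass function. -/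
def IsPMF {Ω : Type*} [Fintype Ω] (μ : Ω → ℝ) : Prop :=
  (∀ ω, 0 ≤ μ ω) ∧ ∑ ω, μ ω = 1

/-- Shannon entropy (base 2) of a finite random variable. -/
def ent {Ω α : Type*} [Fintype Ω] [Fintype α] (μ : Ω → ℝ) (X : Ω → α) : ℝ :=
  -∑ a, pr μ X a * Real.logb 2 (pr μ X a)

/-- Mutual information `I(X;Y)` (base 2). -/
def mi {Ω α β : Type*} [Fintype Ω] [Fintype α] [Fintype β]
    (μ : Ω → ℝ) (X : Ω → α) (Y : Ω → β) : ℝ :=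
  ent μ X + ent μ Y - ent μ (fun ω => (X ω, Y ω))

/-- Conditional entropy `H(X|Y)` (base 2). -/
def cent {Ω α β : Type*} [Fintype Ω] [Fintype α] [Fintype β]
    (μ : Ω → ℝ) (X : Ω → α) (Y : Ω → β) : ℝ :=
  ent μ (fun ω => (X ω, Y ω)) - ent μ Y

/-- Conditional mutual information `I(X;Y|Z)` (base 2). -/
def cmi {Ω α β γ : Type*} [Fintype Ω] [Fintype α] [Fintype β] [Fintype γ]
    (μ : Ω → ℝ) (X : Ω → α) (Y : Ω → β) (Z : Ω → γ) : ℝ :=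
  ent μ (fun ω => (X ω, Z ω)) + ent μ (fun ω => (Y ω, Z ω))
    - ent μ (fun ω => (X ω, Y ω, Z ω)) - ent μ Z

/-- Independence of two finite random variables. -/
def IndepRV {Ω α β : Type*} [Fintype Ω] (μ : Ω → ℝ) (X : Ω → α) (Y : Ω → β) : Prop :=
  ∀ a b, pr μ (fun ω => (X ω, Y ω)) (a, b) = pr μ X a * pr μ Y b

section FRLHelpers

variable {Ω α β : Type*} [Fintype Ω]

lemma pr_nonneg' (μ : Ω → ℝ) (h : ∀ ω, 0 ≤ μ ω) (X : Ω → α) (a : α) :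
    0 ≤ pr μ X a := by
  unfold pr
  apply Finset.sum_nonneg
  intro ω _
  split
  · exact h ω
  · exact le_rfl

lemma pr_comp_equiv' {Ω' : Type*} [Fintype Ω'] (e : Ω ≃ Ω') (μ : Ω → ℝ) (X : Ω → α) (a : α) :
    pr (fun ω' => μ (e.symm ω')) (fun ω' => X (e.symm ω')) a = pr μ X a := by
  unfold pr
  exact Equiv.sum_comp e.symm (fun ω => if X ω = a then μ ω else 0)

lemma sum_pr' [Fintype α] (μ : Ω → ℝ) (X : Ω → α) : ∑ a, pr μ X a = ∑ ω, μ ω := by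
  unfold pr
  rw [Finset.sum_comm]
  apply Finset.sum_congr rfl
  intro ω _
  simp [Finset.sum_ite_eq]

lemma sum_pr_pair' [Fintype β] (μ : Ω → ℝ) (X : Ω → α) (Y : Ω → β) (a : α) :
    ∑ b, pr μ (fun ω => (X ω, Y ω)) (a, b) = pr μ X a := by
  unfold pr
  rw [Finset.sum_comm]
  apply Finset.sum_congr rfl
  intro ω _
  by_cases hX : X ω = a
  · simp [Prod.ext_iff, hX, Finset.sum_ite_eq]
  · simp [Prod.ext_iff, hX]

end FRLHelpers

section PiHelpers
variable {α β : Type*} [Fintype α] [Fintype β]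

lemma sum_prod_pi' (q : α → β → ℝ) :
    ∑ f : α → β, ∏ a, q a (f a) = ∏ a, ∑ b, q a b := by
  rw [Finset.prod_univ_sum (fun _ : α => (univ : Finset β)) (fun a b => q a b),
    Fintype.piFinset_univ]

lemma key_sum_pi' (q : α → β → ℝ) (hq1 : ∀ a, ∑ b, q a b = 1) (a : α) (b : β) :
    ∑ f : α → β, (if f a = b then ∏ a', q a' (f a') else 0) = q a b := by
  set r : α → β → ℝ := fun a' b' => if a' = a then (if b' = b then q a' b' else 0) else q a' b'
    with hr
  have h1 : ∀ f : α → β, (if f a = b then ∏ a', q a' (f a') else 0) = ∏ a', r a' (f a') := by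
    intro f
    by_cases hf : f a = b
    · rw [if_pos hf]
      apply Finset.prod_congr rfl
      intro a' _
      by_cases h : a' = a
      · subst h; simp [hr, hf]
      · simp [hr, h]
    · rw [if_neg hf]
      symm
      apply Finset.prod_eq_zero (Finset.mem_univ a)
      simp [hr, hf]
  calc ∑ f : α → β, (if f a = b then ∏ a', q a' (f a') else 0)
      = ∑ f : α → β, ∏ a', r a' (f a') := by
        exact Finset.sum_congr rfl fun f _ => h1 f
    _ = ∏ a', ∑ b', r a' b' := sum_prod_pi' r
    _ = ∏ a', (if a' = a then q a b else 1) := by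
        apply Finset.prod_congr rfl
        intro a' _
        by_cases h : a' = a
        · subst h; simp [hr, Finset.sum_ite_eq']
        · simp [hr, h, hq1 a']
    _ = q a b := by simp [Finset.prod_ite_eq']
end PiHelpers

theorem functional_representation_lemma'
    {Ω α β : Type*} [Fintype Ω] [Fintype α] [Fintype β]
    (μ : Ω → ℝ) (hμ : IsPMF μ) (X : Ω → α) (Y : Ω → β) :
    ∃ (m n : ℕ) (μ' : Fin m → ℝ) (X' : Fin m → α) (Y' : Fin m → β)
      (S' : Fin m → Fin n) (g : α → Fin n → β),
      IsPMF μ' ∧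
      (∀ a b, pr μ' (fun ω => (X' ω, Y' ω)) (a, b) = pr μ (fun ω => (X ω, Y ω)) (a, b)) ∧
      IndepRV μ' X' S' ∧
      (∀ ω, 0 < μ' ω → Y' ω = g (X' ω) (S' ω)) := by
  rcases isEmpty_or_nonempty Ω with hΩ | hΩ
  · exfalso
    have h2 := hμ.2
    simp [Finset.univ_eq_empty] at h2
  obtain ⟨ω₀⟩ := hΩ
  -- marginal and joint probabilities
  set pX : α → ℝ := fun a => pr μ X a with hpX
  set pXY : α → β → ℝ := fun a b => pr μ (fun ω => (X ω, Y ω)) (a, b) with hpXY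
  have hpX0 : ∀ a, 0 ≤ pX a := fun a => pr_nonneg' μ hμ.1 X a
  have hpXY0 : ∀ a b, 0 ≤ pXY a b := fun a b =>
    pr_nonneg' μ hμ.1 (fun ω => (X ω, Y ω)) (a, b)
  have hmarg : ∀ a, ∑ b, pXY a b = pX a := fun a => sum_pr_pair' μ X Y a
  have hsumpX : ∑ a, pX a = 1 := by rw [hpX]; rw [sum_pr' μ X, hμ.2]
  -- conditional distribution of Y given X = a
  set q : α → β → ℝ := fun a b =>
    if 0 < pX a then pXY a b / pX a else if b = Y ω₀ then 1 else 0 with hq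
  have hq0 : ∀ a b, 0 ≤ q a b := by
    intro a b
    simp only [hq]
    by_cases h : 0 < pX a
    · rw [if_pos h]
      exact div_nonneg (hpXY0 a b) (hpX0 a)
    · rw [if_neg h]
      split
      · norm_num
      · exact le_rfl
  have hq1 : ∀ a, ∑ b, q a b = 1 := by
    intro a
    by_cases h : 0 < pX a
    · trans (∑ b, pXY a b / pX a)
      · apply Finset.sum_congr rfl
        intro b _
        simp only [hq]
        rw [if_pos h]
      · rw [← Finset.sum_div, hmarg a, div_self (ne_of_gt h)]
    · trans (∑ b, if b = Y ω₀ then (1 : ℝ) else 0)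
      · apply Finset.sum_congr rfl
        intro b _
        simp only [hq]
        rw [if_neg h]
      · simp [Finset.sum_ite_eq']
  have hqmul : ∀ a b, pX a * q a b = pXY a b := by
    intro a b
    by_cases h : 0 < pX a
    · simp only [hq]
      rw [if_pos h]
      field_simp
    · have hz : pX a = 0 := le_antisymm (not_lt.1 h) (hpX0 a)
      have hzz : pXY a b = 0 := by
        have h1 : pXY a b ≤ ∑ b', pXY a b' :=
          Finset.single_le_sum (fun b' _ => hpXY0 a b') (Finset.mem_univ b)
        rw [hmarg a, hz] at h1
        exact le_antisymm h1 (hpXY0 a b)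
      rw [hz, hzz, zero_mul]
  -- product measure on α × (α → β)
  set ν : (α → β) → ℝ := fun f => ∏ a', q a' (f a') with hν
  have hν0 : ∀ f, 0 ≤ ν f := by
    intro f
    simp only [hν]
    exact Finset.prod_nonneg fun a' _ => hq0 a' (f a')
  have hν1 : ∑ f : α → β, ν f = 1 := by
    calc ∑ f : α → β, ν f = ∏ a, ∑ b, q a b := sum_prod_pi' q
      _ = 1 := Finset.prod_eq_one fun a _ => hq1 a
  set μ₀ : α × (α → β) → ℝ := fun p => pX p.1 * ν p.2 with hμ₀
  -- computations of probabilities under μ₀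
  have prX0 : ∀ a, pr μ₀ Prod.fst a = pX a := by
    intro a
    unfold pr
    rw [Fintype.sum_prod_type]
    trans (∑ a' : α, if a' = a then pX a' else 0)
    · apply Finset.sum_congr rfl
      intro a' _
      by_cases h : a' = a
      · rw [if_pos h]
        subst h
        trans (∑ y : α → β, μ₀ (a', y))
        · apply Finset.sum_congr rfl
          intro y _
          exact if_pos rfl
        · simp only [hμ₀]
          rw [← Finset.mul_sum, hν1, mul_one]
      · rw [if_neg h]
        apply Finset.sum_eq_zero
        intro y _
        exact if_neg h
    · exact Eq.trans (Finset.sum_eq_single_of_mem a (Finset.mem_univ a)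
        fun a' _ h => if_neg h) (if_pos rfl)
  have prS0 : ∀ f : α → β, pr μ₀ Prod.snd f = ν f := by
    intro f
    unfold pr
    rw [Fintype.sum_prod_type]
    trans (∑ x : α, pX x * ν f)
    · apply Finset.sum_congr rfl
      intro x _
      refine Eq.trans (Finset.sum_eq_single_of_mem f (Finset.mem_univ f)
        fun y _ hy => if_neg hy) ?_
      exact Eq.trans (if_pos rfl) (by simp [hμ₀])
    · rw [← Finset.sum_mul, hsumpX, one_mul]
  have prXS0 : ∀ (a : α) (f : α → β),
      pr μ₀ (fun p => (p.1, p.2)) (a, f) = pX a * ν f := by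
    intro a f
    unfold pr
    refine Eq.trans (Finset.sum_eq_single_of_mem (a, f) (Finset.mem_univ _) ?_) ?_
    · intro p _ hp
      apply if_neg
      intro hc
      apply hp
      have h1 : p.1 = a := congrArg Prod.fst hc
      have h2 : p.2 = f := congrArg Prod.snd hc
      exact Prod.ext h1 h2
    · exact Eq.trans (if_pos rfl) (by simp [hμ₀])
  have prXY0 : ∀ (a : α) (b : β),
      pr μ₀ (fun p => (p.1, p.2 p.1)) (a, b) = pXY a b := by
    intro a b
    unfold pr
    rw [Fintype.sum_prod_type]
    trans (∑ a' : α, if a' = a then pXY a b else 0)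
    · apply Finset.sum_congr rfl
      intro a' _
      by_cases h : a' = a
      · rw [if_pos h]
        subst h
        trans (pX a' * ∑ y : α → β, if y a' = b then ν y else 0)
        · rw [Finset.mul_sum]
          apply Finset.sum_congr rfl
          intro y _
          by_cases hy : y a' = b
          · refine Eq.trans (if_pos (show ((a', y a') : α × β) = (a', b) by rw [hy])) ?_
            rw [if_pos hy]
          · refine Eq.trans (if_neg ?_) ?_
            · intro hc
              exact hy (congrArg Prod.snd hc)
            · rw [if_neg hy, mul_zero]
        · have hkey : (∑ y : α → β, if y a' = b then ν y else 0) = q a' b :=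
            key_sum_pi' q hq1 a' b
          rw [hkey]
          exact hqmul a' b
      · rw [if_neg h]
        apply Finset.sum_eq_zero
        intro y _
        apply if_neg
        intro hc
        exact h (congrArg Prod.fst hc)
    · exact Eq.trans (Finset.sum_eq_single_of_mem a (Finset.mem_univ a)
        fun a' _ h => if_neg h) (if_pos rfl)
  -- transport to Fin m, Fin n
  set m := Fintype.card (α × (α → β)) with hm
  set n := Fintype.card (α → β) with hn
  set e : (α × (α → β)) ≃ Fin m := Fintype.equivFin _ with he
  set eS : (α → β) ≃ Fin n := Fintype.equivFin _ with heS
  refine ⟨m, n, fun i => μ₀ (e.symm i), fun i => (e.symm i).1,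
    fun i => (e.symm i).2 (e.symm i).1, fun i => eS ((e.symm i).2),
    fun a s => (eS.symm s) a, ⟨?_, ?_⟩, ?_, ?_, ?_⟩
  · intro i
    simp only [hμ₀]
    exact mul_nonneg (hpX0 _) (hν0 _)
  · trans (∑ p : α × (α → β), μ₀ p)
    · exact Equiv.sum_comp e.symm μ₀
    · rw [Fintype.sum_prod_type]
      trans (∑ x : α, pX x * ∑ y : α → β, ν y)
      · apply Finset.sum_congr rfl
        intro x _
        rw [Finset.mul_sum]
      · rw [hν1]
        simp [hsumpX]
  · intro a b
    exact (pr_comp_equiv' e μ₀ (fun p => (p.1, p.2 p.1)) (a, b)).trans (prXY0 a b)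
  · intro a s
    have h1 : pr (fun i => μ₀ (e.symm i))
        (fun i => (((e.symm i).1 : α), eS ((e.symm i).2))) (a, s)
        = pr μ₀ (fun p => (p.1, eS p.2)) (a, s) :=
      pr_comp_equiv' e μ₀ (fun p => (p.1, eS p.2)) (a, s)
    have h2 : pr μ₀ (fun p => (p.1, eS p.2)) (a, s) = pX a * ν (eS.symm s) := by
      unfold pr
      refine Eq.trans (Finset.sum_eq_single_of_mem (a, eS.symm s) (Finset.mem_univ _) ?_) ?_
      · intro p _ hp
        apply if_neg
        intro hc
        apply hp
        have hc1 : p.1 = a := congrArg Prod.fst hc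
        have hc2 : eS p.2 = s := congrArg Prod.snd hc
        have hc3 : p.2 = eS.symm s := by rw [← hc2, Equiv.symm_apply_apply]
        exact Prod.ext hc1 hc3
      · refine Eq.trans (if_pos ?_) (by simp [hμ₀])
        show ((a : α), eS (eS.symm s)) = (a, s)
        rw [Equiv.apply_symm_apply]
    have h3 : pr (fun i => μ₀ (e.symm i)) (fun i => (e.symm i).1) a = pX a :=
      (pr_comp_equiv' e μ₀ Prod.fst a).trans (prX0 a)
    have h4 : pr (fun i => μ₀ (e.symm i)) (fun i => eS ((e.symm i).2)) s
        = ν (eS.symm s) := by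
      refine (pr_comp_equiv' e μ₀ (fun p => eS p.2) s).trans ?_
      unfold pr
      rw [Fintype.sum_prod_type]
      trans (∑ x : α, pX x * ν (eS.symm s))
      · apply Finset.sum_congr rfl
        intro x _
        refine Eq.trans (Finset.sum_eq_single_of_mem (eS.symm s) (Finset.mem_univ _) ?_) ?_
        · intro y _ hy
          apply if_neg
          intro hc
          exact hy ((Equiv.eq_symm_apply eS).mpr hc)
        · refine Eq.trans (if_pos ?_) (by simp [hμ₀])
          show eS (eS.symm s) = s
          exact Equiv.apply_symm_apply eS s
      · rw [← Finset.sum_mul, hsumpX, one_mul]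
    exact h1.trans (h2.trans (by rw [h3, h4]))
  · intro i _
    simp

/-- Functional Representation Lemma: for any two finite random variables `X` and `Y`
(on a common finite probability space), there exist a probability space, copies
`X'`, `Y'` of `(X, Y)` (same joint distribution), a finite random variable `S'`
independent of `X'`, and a function `g` such that `Y' = g(X', S')` almost surely. -/
theorem functional_representation_lemma
    {Ω α β : Type*} [Fintype Ω] [Fintype α] [Fintype β]
    (μ : Ω → ℝ) (hμ : IsPMF μ) (X : Ω → α) (Y : Ω → β) :
    ∃ (m n : ℕ) (μ' : Fin m → ℝ) (X' : Fin m → α) (Y' : Fin m → β)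
      (S' : Fin m → Fin n) (g : α → Fin n → β),
      IsPMF μ' ∧
      (∀ a b, pr μ' (fun ω => (X' ω, Y' ω)) (a, b) = pr μ (fun ω => (X ω, Y ω)) (a, b)) ∧
      IndepRV μ' X' S' ∧
      (∀ ω, 0 < μ' ω → Y' ω = g (X' ω) (S' ω)) := by
  exact functional_representation_lemma' μ hμ X Y
end
end

section
/- Let U, X be jointly distributed finite random variables, let Y = f(X) for a deterministic function f, suppose X = g(Y, U) for a deterministic function g, let S ~ Bernoulli(p) be independent of (U, X), and set Z = X if S = 0 and Z = ? if S = 1. Then I(U; Z) = (1−p)·I(U; Y) + (1−p)·H(X | Y), and consequently I(U; Z) ≤ (1−p)·I(U; Y) + (1−p)·∑_{y} P(Y = y)·log₂ |X_y|, where X_y = { x : f(x) = y }. -/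
open Finset
open scoped Classical

noncomputable section

section helpers
variable {Ω : Type*} [Fintype Ω] {μ : Ω → ℝ}

lemma sum_univ_option {δ : Type*} [Fintype δ] (F : Option δ → ℝ) :
    ∑ o : Option δ, F o = F none + ∑ d, F (some d) := by
  rw [univ_option, Finset.sum_insertNone]

lemma pr_nonneg (hμ : ∀ ω, 0 ≤ μ ω) {δ : Type*} (W : Ω → δ) (d : δ) : 0 ≤ pr μ W d :=
  Finset.sum_nonneg fun ω _ => by split <;> simp [hμ ω]

lemma sum_pr (hμ : ∑ ω, μ ω = 1) {δ : Type*} [Fintype δ] (W : Ω → δ) :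
    ∑ d, pr μ W d = 1 := by
  unfold pr
  rw [Finset.sum_comm]
  simp only [Finset.sum_ite_eq, Finset.mem_univ, if_true]
  exact hμ

lemma pr_comp_inj {δ ε : Type*} (W : Ω → δ) (k : δ → ε) (hk : Function.Injective k) (d : δ) :
    pr μ (fun ω => k (W ω)) (k d) = pr μ W d := by
  unfold pr
  exact Finset.sum_congr rfl fun ω _ => by simp [hk.eq_iff]

lemma pr_comp_eq_zero {δ ε : Type*} (W : Ω → δ) (k : δ → ε) {e : ε} (he : ∀ d, k d ≠ e) :
    pr μ (fun ω => k (W ω)) e = 0 := by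
  unfold pr; simp [he]

lemma pr_marg_fst {δ ε : Type*} [Fintype ε] (W : Ω → δ) (V : Ω → ε) (d : δ) :
    pr μ W d = ∑ e, pr μ (fun ω => (W ω, V ω)) (d, e) := by
  unfold pr
  rw [Finset.sum_comm]
  refine Finset.sum_congr rfl fun ω _ => ?_
  by_cases h : W ω = d <;> simp [Prod.ext_iff, h, Finset.sum_ite_eq]

lemma pr_marg_snd {δ ε : Type*} [Fintype δ] (W : Ω → δ) (V : Ω → ε) (e : ε) :
    pr μ V e = ∑ d, pr μ (fun ω => (W ω, V ω)) (d, e) := by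
  unfold pr
  rw [Finset.sum_comm]
  refine Finset.sum_congr rfl fun ω _ => ?_
  by_cases h : V ω = e <;> simp [Prod.ext_iff, h, Finset.sum_ite_eq]

lemma ent_comp_inj {δ ε : Type*} [Fintype δ] [Fintype ε] (W : Ω → δ) (k : δ → ε)
    (hk : Function.Injective k) :
    ent μ (fun ω => k (W ω)) = ent μ W := by
  unfold ent
  congr 1
  have h1 : ∑ e, pr μ (fun ω => k (W ω)) e * Real.logb 2 (pr μ (fun ω => k (W ω)) e)
      = ∑ e ∈ Finset.univ.image k,
          pr μ (fun ω => k (W ω)) e * Real.logb 2 (pr μ (fun ω => k (W ω)) e) := by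
    symm
    apply Finset.sum_subset (Finset.subset_univ _)
    intro e _ he
    have hz : pr μ (fun ω => k (W ω)) e = 0 := by
      apply pr_comp_eq_zero
      intro d hd
      exact he (hd ▸ Finset.mem_image_of_mem k (Finset.mem_univ d))
    simp [hz]
  rw [h1, Finset.sum_image (fun a _ b _ h => hk h)]
  exact Finset.sum_congr rfl fun d _ => by rw [pr_comp_inj W k hk]

lemma mul_mul_logb (a b : ℝ) :
    a * b * Real.logb 2 (a * b) = a * b * Real.logb 2 a + a * b * Real.logb 2 b := by
  rcases eq_or_ne a 0 with ha | ha
  · simp [ha]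
  rcases eq_or_ne b 0 with hb | hb
  · simp [hb]
  rw [Real.logb, Real.logb, Real.logb, Real.log_mul ha hb]
  ring

lemma gibbs {κ : Type*} (T : Finset κ) (q : κ → ℝ) (hq : ∀ x ∈ T, 0 ≤ q x) :
    -∑ x ∈ T, q x * Real.log (q x) + (∑ x ∈ T, q x) * Real.log (∑ x ∈ T, q x)
      ≤ (∑ x ∈ T, q x) * Real.log (T.card : ℝ) := by
  set w := ∑ x ∈ T, q x with hw
  rcases eq_or_lt_of_le (Finset.sum_nonneg hq) with h0 | hpos
  · have hz : ∀ x ∈ T, q x = 0 := (Finset.sum_eq_zero_iff_of_nonneg hq).mp h0.symm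
    have hs : ∑ x ∈ T, q x * Real.log (q x) = 0 :=
      Finset.sum_eq_zero fun x hx => by rw [hz x hx]; ring
    have hw0 : w = 0 := h0.symm
    rw [hs, hw0]
    simp
  · have hTne : T.Nonempty := by
      by_contra h
      rw [Finset.not_nonempty_iff_eq_empty] at h
      simp [hw, h] at hpos
    have hn : (0:ℝ) < (T.card : ℝ) := by
      exact_mod_cast Finset.card_pos.mpr hTne
    have key : ∀ x ∈ T,
        q x * Real.log w - q x * Real.log (q x) - q x * Real.log (T.card : ℝ)
          ≤ w / (T.card : ℝ) - q x := by
      intro x hx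
      rcases eq_or_lt_of_le (hq x hx) with h0x | hx0
      · rw [← h0x]
        simp
        positivity
      · have harg : (0:ℝ) < w / (q x * (T.card : ℝ)) := by positivity
        have hle := Real.log_le_sub_one_of_pos harg
        rw [Real.log_div (ne_of_gt hpos) (by positivity),
            Real.log_mul (ne_of_gt hx0) (ne_of_gt hn)] at hle
        have h2 := mul_le_mul_of_nonneg_left hle (le_of_lt hx0)
        have h3 : q x * (w / (q x * (T.card : ℝ)) - 1) = w / (T.card : ℝ) - q x := by
          field_simp
        nlinarith [h2, h3]
    have hsum := Finset.sum_le_sum key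
    have hrhs : ∑ x ∈ T, (w / (T.card : ℝ) - q x) = 0 := by
      rw [Finset.sum_sub_distrib, Finset.sum_const, ← hw, nsmul_eq_mul]
      field_simp
      ring
    have hlhs : ∑ x ∈ T,
        (q x * Real.log w - q x * Real.log (q x) - q x * Real.log (T.card : ℝ))
        = (-∑ x ∈ T, q x * Real.log (q x) + w * Real.log w)
            - w * Real.log (T.card : ℝ) := by
      rw [Finset.sum_sub_distrib, Finset.sum_sub_distrib, ← Finset.sum_mul, ← Finset.sum_mul,
        ← hw]
      ring
    rw [hlhs, hrhs] at hsum
    linarith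

lemma ent_aux {κ : Type*} [Fintype κ] (T : Finset κ) (q : κ → ℝ) (hq : ∀ x, 0 ≤ q x)
    (hsupp : ∀ x ∉ T, q x = 0) :
    -∑ x, q x * Real.logb 2 (q x) + (∑ x, q x) * Real.logb 2 (∑ x, q x)
      ≤ (∑ x, q x) * Real.logb 2 (T.card : ℝ) := by
  have e1 : ∑ x, q x * Real.logb 2 (q x) = ∑ x ∈ T, q x * Real.logb 2 (q x) := by
    symm
    exact Finset.sum_subset (Finset.subset_univ T) (fun x _ hx => by simp [hsupp x hx])
  have e2 : ∑ x, q x = ∑ x ∈ T, q x := by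
    symm
    exact Finset.sum_subset (Finset.subset_univ T) (fun x _ hx => hsupp x hx)
  rw [e1, e2]
  have hg := gibbs T q (fun x _ => hq x)
  have hl2 : (0:ℝ) < Real.log 2 := Real.log_pos one_lt_two
  simp only [Real.logb, mul_div_assoc']
  rw [← Finset.sum_div, ← neg_div, ← add_div]
  exact div_le_div_of_nonneg_right hg hl2.le

end helpers

/-- If `Y = f(X)`, `X = g(Y,U)`, `S ~ Bernoulli(p)` is independent of `(U,X)`,
and `Z` is the erasure of `X` by `S`, then
`I(U;Z) = (1−p)·I(U;Y) + (1−p)·H(X|Y)`, and consequently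
`I(U;Z) ≤ (1−p)·I(U;Y) + (1−p)·∑_y P(Y=y)·log₂|X_y|` where `X_y = f⁻¹(y)`. -/


theorem stmt13 {Ω α β γ : Type*} [Fintype Ω] [Fintype α] [Fintype β] [Fintype γ]
    (μ : Ω → ℝ) (hμ : IsPMF μ) (U : Ω → α) (X : Ω → β) (Y : Ω → γ)
    (f : β → γ) (hf : ∀ ω, Y ω = f (X ω))
    (g : γ → α → β) (hg : ∀ ω, X ω = g (Y ω) (U ω))
    (S : Ω → Bool) (p : ℝ) (hp : p ∈ Set.Icc (0:ℝ) 1) (hS : pr μ S true = p)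
    (hindep : IndepRV μ S (fun ω => (U ω, X ω))) :
    mi μ U (fun ω => if S ω then (none : Option β) else some (X ω))
        = (1 - p) * mi μ U Y + (1 - p) * cent μ X Y ∧
    mi μ U (fun ω => if S ω then (none : Option β) else some (X ω))
        ≤ (1 - p) * mi μ U Y
          + (1 - p) * ∑ y, pr μ Y y
              * Real.logb 2 ((Finset.univ.filter (fun x => f x = y)).card : ℝ) := by
  obtain ⟨hμ0, hμ1⟩ := hμ
  set Z : Ω → Option β := fun ω => if S ω then none else some (X ω) with hZdef
  have h1p : (0:ℝ) ≤ 1 - p := by linarith [hp.2]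
  have hsumX : ∑ x, pr μ X x = 1 := sum_pr hμ1 X
  have hsumU : ∑ a, pr μ U a = 1 := sum_pr hμ1 U
  have hsumUX : ∑ t : α × β, pr μ (fun ω => (U ω, X ω)) t = 1 := sum_pr hμ1 _
  have hSfalse : pr μ S false = 1 - p := by
    have h := sum_pr hμ1 S
    rw [Fintype.sum_bool, hS] at h
    linarith
  -- independence marginals
  have hSU : ∀ a, pr μ (fun ω => (S ω, U ω)) (true, a) = p * pr μ U a := by
    intro a
    have hm := pr_marg_fst (μ := μ) (fun ω => (S ω, U ω)) X (true, a)
    have hk : ∀ x, pr μ (fun ω => ((S ω, U ω), X ω)) ((true, a), x)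
        = p * pr μ (fun ω => (U ω, X ω)) (a, x) := by
      intro x
      have hinj : Function.Injective
          (fun t : Bool × (α × β) => ((t.1, t.2.1), t.2.2)) := by
        intro t1 t2 h
        simp [Prod.ext_iff] at h
        simp [Prod.ext_iff, h]
      have := pr_comp_inj (μ := μ) (fun ω => (S ω, (U ω, X ω)))
        (fun t : Bool × (α × β) => ((t.1, t.2.1), t.2.2)) hinj (true, (a, x))
      simp only at this
      rw [this, hindep true (a, x), hS]
    rw [hm, Finset.sum_congr rfl fun x _ => hk x, ← Finset.mul_sum,
      ← pr_marg_fst U X a]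
  have hSX : ∀ x, pr μ (fun ω => (S ω, X ω)) (false, x) = (1 - p) * pr μ X x := by
    intro x
    have hm := pr_marg_fst (μ := μ) (fun ω => (S ω, X ω)) U (false, x)
    have hk : ∀ a, pr μ (fun ω => ((S ω, X ω), U ω)) ((false, x), a)
        = (1 - p) * pr μ (fun ω => (U ω, X ω)) (a, x) := by
      intro a
      have hinj : Function.Injective
          (fun t : Bool × (α × β) => ((t.1, t.2.2), t.2.1)) := by
        intro t1 t2 h
        simp [Prod.ext_iff] at h
        simp [Prod.ext_iff, h]
      have := pr_comp_inj (μ := μ) (fun ω => (S ω, (U ω, X ω)))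
        (fun t : Bool × (α × β) => ((t.1, t.2.2), t.2.1)) hinj (false, (a, x))
      simp only at this
      rw [this, hindep false (a, x), hSfalse]
    rw [hm, Finset.sum_congr rfl fun a _ => hk a, ← Finset.mul_sum,
      ← pr_marg_snd U X x]
  -- distribution of Z and (U, Z)
  have hZnone : pr μ Z none = p := by
    rw [← hS]
    refine Finset.sum_congr rfl fun ω _ => ?_
    by_cases h : S ω <;> simp [hZdef, h]
  have hZsome : ∀ x, pr μ Z (some x) = (1 - p) * pr μ X x := by
    intro x
    rw [← hSX x]
    refine Finset.sum_congr rfl fun ω _ => ?_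
    by_cases h : S ω <;> simp [hZdef, h, Prod.ext_iff]
  have hUZnone : ∀ a, pr μ (fun ω => (U ω, Z ω)) (a, none) = p * pr μ U a := by
    intro a
    rw [← hSU a]
    refine Finset.sum_congr rfl fun ω _ => ?_
    by_cases h : S ω <;> simp [hZdef, h, Prod.ext_iff, and_comm]
  have hUZsome : ∀ a x, pr μ (fun ω => (U ω, Z ω)) (a, some x)
      = (1 - p) * pr μ (fun ω => (U ω, X ω)) (a, x) := by
    intro a x
    have h1 : pr μ (fun ω => (U ω, Z ω)) (a, some x)
        = pr μ (fun ω => (S ω, (U ω, X ω))) (false, (a, x)) := by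
      refine Finset.sum_congr rfl fun ω _ => ?_
      by_cases h : S ω <;> simp [hZdef, h, Prod.ext_iff, and_comm]
    rw [h1, hindep false (a, x), hSfalse]
  -- entropy of Z
  have hentZ : ent μ Z
      = -(p * Real.logb 2 p) - (1 - p) * Real.logb 2 (1 - p) + (1 - p) * ent μ X := by
    unfold ent
    rw [sum_univ_option, hZnone]
    have hterm : ∀ x, pr μ Z (some x) * Real.logb 2 (pr μ Z (some x))
        = ((1 - p) * Real.logb 2 (1 - p)) * pr μ X x
          + (1 - p) * (pr μ X x * Real.logb 2 (pr μ X x)) := by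
      intro x
      rw [hZsome x, mul_mul_logb (1 - p) (pr μ X x)]
      ring
    rw [Finset.sum_congr rfl fun x _ => hterm x, Finset.sum_add_distrib,
      ← Finset.mul_sum, ← Finset.mul_sum, hsumX]
    ring
  -- entropy of (U, Z)
  have hentUZ : ent μ (fun ω => (U ω, Z ω))
      = -(p * Real.logb 2 p) + p * ent μ U - (1 - p) * Real.logb 2 (1 - p)
        + (1 - p) * ent μ (fun ω => (U ω, X ω)) := by
    unfold ent
    rw [Fintype.sum_prod_type]
    have hA : ∑ a, ∑ x, pr μ (fun ω => (U ω, X ω)) (a, x) = 1 := by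
      rw [← Fintype.sum_prod_type]; exact hsumUX
    have hrow : ∀ a, ∑ o : Option β,
        pr μ (fun ω => (U ω, Z ω)) (a, o) * Real.logb 2 (pr μ (fun ω => (U ω, Z ω)) (a, o))
        = (p * Real.logb 2 p) * pr μ U a + p * (pr μ U a * Real.logb 2 (pr μ U a))
          + ((1 - p) * Real.logb 2 (1 - p)) * (∑ x, pr μ (fun ω => (U ω, X ω)) (a, x))
          + (1 - p) * (∑ x, pr μ (fun ω => (U ω, X ω)) (a, x)
              * Real.logb 2 (pr μ (fun ω => (U ω, X ω)) (a, x))) := by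
      intro a
      rw [sum_univ_option, hUZnone a, mul_mul_logb p (pr μ U a)]
      have hterm : ∀ x, pr μ (fun ω => (U ω, Z ω)) (a, some x)
            * Real.logb 2 (pr μ (fun ω => (U ω, Z ω)) (a, some x))
          = ((1 - p) * Real.logb 2 (1 - p)) * pr μ (fun ω => (U ω, X ω)) (a, x)
            + (1 - p) * (pr μ (fun ω => (U ω, X ω)) (a, x)
                * Real.logb 2 (pr μ (fun ω => (U ω, X ω)) (a, x))) := by
        intro x
        rw [hUZsome a x, mul_mul_logb (1 - p) (pr μ (fun ω => (U ω, X ω)) (a, x))]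
        ring
      rw [Finset.sum_congr rfl fun x _ => hterm x, Finset.sum_add_distrib,
        ← Finset.mul_sum, ← Finset.mul_sum]
      ring
    rw [Finset.sum_congr rfl fun a _ => hrow a, Finset.sum_add_distrib,
      Finset.sum_add_distrib, Finset.sum_add_distrib, ← Finset.mul_sum, ← Finset.mul_sum,
      ← Finset.mul_sum, ← Finset.mul_sum, hsumU, hA,
      Fintype.sum_prod_type (fun t : α × β => pr μ (fun ω => (U ω, X ω)) t
        * Real.logb 2 (pr μ (fun ω => (U ω, X ω)) t))]
    ring
  -- I(U;Z) = (1-p) I(U;X)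
  have hmiZ : mi μ U Z = (1 - p) * mi μ U X := by
    unfold mi
    rw [hentZ, hentUZ]
    ring
  -- entropy identities from determinism
  have hXY : ent μ (fun ω => (X ω, Y ω)) = ent μ X := by
    have he : (fun ω => (X ω, Y ω)) = fun ω => ((fun x => (x, f x)) (X ω)) :=
      funext fun ω => by rw [hf ω]
    rw [he]
    exact ent_comp_inj X (fun x => (x, f x)) (fun a b h => (Prod.ext_iff.mp h).1)
  have hUYX1 : ent μ (fun ω => (U ω, Y ω, X ω)) = ent μ (fun ω => (U ω, X ω)) := by
    have he : (fun ω => (U ω, Y ω, X ω))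
        = fun ω => ((fun t : α × β => (t.1, f t.2, t.2)) ((fun ω => (U ω, X ω)) ω)) :=
      funext fun ω => by simp [hf ω]
    rw [he]
    refine ent_comp_inj (fun ω => (U ω, X ω)) (fun t : α × β => (t.1, f t.2, t.2)) ?_
    intro a b h
    simp only [Prod.ext_iff] at h
    exact Prod.ext h.1 h.2.2
  have hUYX2 : ent μ (fun ω => (U ω, Y ω, X ω)) = ent μ (fun ω => (U ω, Y ω)) := by
    have he : (fun ω => (U ω, Y ω, X ω))
        = fun ω => ((fun t : α × γ => (t.1, t.2, g t.2 t.1)) ((fun ω => (U ω, Y ω)) ω)) :=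
      funext fun ω => by simp [hg ω]
    rw [he]
    refine ent_comp_inj (fun ω => (U ω, Y ω)) (fun t : α × γ => (t.1, t.2, g t.2 t.1)) ?_
    intro a b h
    simp only [Prod.ext_iff] at h
    exact Prod.ext h.1 h.2.1
  have hUXUY : ent μ (fun ω => (U ω, X ω)) = ent μ (fun ω => (U ω, Y ω)) :=
    hUYX1.symm.trans hUYX2
  have hdecomp : mi μ U X = mi μ U Y + cent μ X Y := by
    unfold mi cent
    rw [hXY, hUXUY]
    ring
  have heq : mi μ U Z = (1 - p) * mi μ U Y + (1 - p) * cent μ X Y := by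
    rw [hmiZ, hdecomp]
    ring
  refine ⟨heq, ?_⟩
  rw [heq]
  have hcb : cent μ X Y ≤ ∑ y, pr μ Y y
      * Real.logb 2 ((Finset.univ.filter (fun x => f x = y)).card : ℝ) := by
    unfold cent ent
    rw [Fintype.sum_prod_type_right]
    have hcomb : (-∑ y, ∑ x, pr μ (fun ω => (X ω, Y ω)) (x, y)
          * Real.logb 2 (pr μ (fun ω => (X ω, Y ω)) (x, y)))
        - -∑ y, pr μ Y y * Real.logb 2 (pr μ Y y)
        = ∑ y, ((-∑ x, pr μ (fun ω => (X ω, Y ω)) (x, y)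
            * Real.logb 2 (pr μ (fun ω => (X ω, Y ω)) (x, y)))
          + pr μ Y y * Real.logb 2 (pr μ Y y)) := by
      rw [Finset.sum_add_distrib]
      simp
    rw [hcomb]
    refine Finset.sum_le_sum fun y _ => ?_
    have hw : pr μ Y y = ∑ x, pr μ (fun ω => (X ω, Y ω)) (x, y) := pr_marg_snd X Y y
    rw [hw]
    refine ent_aux _ _ (fun x => pr_nonneg hμ0 _ _) ?_
    intro x hx
    have hfx : f x ≠ y := by simpa using hx
    refine Finset.sum_eq_zero fun ω _ => ?_
    rw [if_neg]
    intro hc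
    rw [Prod.ext_iff] at hc
    simp only at hc
    exact hfx (by rw [← hc.1, ← hf ω, hc.2])
  have := mul_le_mul_of_nonneg_left hcb h1p
  linarith
end
end
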